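/- Let n, m be positive integers, let h ∈ ℝⁿ, let W be a real m×n matrix, let c > 0, and let η, ζ ∈ ℝ. Let f : ℝᵐ → ℝ be differentiable at z := Wh with gradient g := ∇f(z). Assume that no coordinate of z equals c or −c, and that the clipping residual d := z − clip(z; [−c,c]) is nonzero. Define the loss L on m×n matrices by L(V) = f(Vh) + ζ‖Vh − clip(Vh; [−c,c])‖₂. Then L is differentiable at W, and the updated matrix W′ = W − η∇L(W) satisfies the pre-activation update decomposition W′h − Wh = (−η)‖h‖₂² g + (−η)ζ‖h‖₂² d/‖d‖₂. -/

import Mathlib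

/-- Coordinatewise clipping of a vector to the interval `[-c, c]`. -/
noncomputable def clip {m : ℕ} (c : ℝ) (z : EuclideanSpace ℝ (Fin m)) :
    EuclideanSpace ℝ (Fin m) :=
  WithLp.toLp 2 (fun i => max (-c) (min (z i) c))

/-- Action of an `m × n` matrix (encoded as a point of the Euclidean space
`ℝ^(m × n)` with the Frobenius inner product) on a vector. -/
noncomputable def matVec {m n : ℕ} (V : EuclideanSpace ℝ (Fin m × Fin n))
    (h : EuclideanSpace ℝ (Fin n)) : EuclideanSpace ℝ (Fin m) :=
  WithLp.toLp 2 (fun i => ∑ j, V (i, j) * h j)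

noncomputable def matVecL {m n : ℕ} (h : EuclideanSpace ℝ (Fin n)) :
    EuclideanSpace ℝ (Fin m × Fin n) →L[ℝ] EuclideanSpace ℝ (Fin m) :=
  LinearMap.toContinuousLinearMap
  { toFun := fun V => matVec V h
    map_add' := by
      intro V V'; ext i
      simp [matVec, add_mul, Finset.sum_add_distrib]
    map_smul' := by
      intro a V; ext i
      simp [matVec, Finset.mul_sum, mul_assoc] }

@[simp] lemma matVecL_apply {m n : ℕ} (h : EuclideanSpace ℝ (Fin n))
    (V : EuclideanSpace ℝ (Fin m × Fin n)) : matVecL h V = matVec V h := rfl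

noncomputable def matVecAdj {m n : ℕ} (h : EuclideanSpace ℝ (Fin n)) :
    EuclideanSpace ℝ (Fin m) →L[ℝ] EuclideanSpace ℝ (Fin m × Fin n) :=
  LinearMap.toContinuousLinearMap
  { toFun := fun u => WithLp.toLp 2 (fun p : Fin m × Fin n => u p.1 * h p.2)
    map_add' := by intro u u'; ext p; simp [add_mul]
    map_smul' := by intro a u; ext p; simp [mul_assoc]  }

@[simp] lemma matVecAdj_apply {m n : ℕ} (h : EuclideanSpace ℝ (Fin n))
    (u : EuclideanSpace ℝ (Fin m)) (p : Fin m × Fin n) :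
    matVecAdj h u p = u p.1 * h p.2 := rfl

lemma inner_matVecAdj {m n : ℕ} (h : EuclideanSpace ℝ (Fin n))
    (u : EuclideanSpace ℝ (Fin m)) (V : EuclideanSpace ℝ (Fin m × Fin n)) :
    @inner ℝ _ _ (matVecAdj h u) V = @inner ℝ _ _ u (matVecL h V) := by
  simp only [PiLp.inner_apply, RCLike.inner_apply, starRingEnd_apply, star_trivial,
    matVecL_apply, matVecAdj_apply, matVec]
  rw [Fintype.sum_prod_type]
  congr 1; funext i
  rw [Finset.sum_mul]
  congr 1; funext j
  ring

lemma matVecL_matVecAdj {m n : ℕ} (h : EuclideanSpace ℝ (Fin n))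
    (u : EuclideanSpace ℝ (Fin m)) :
    matVecL h (matVecAdj h u) = (‖h‖ ^ 2 : ℝ) • u := by
  have hns : (‖h‖ ^ 2 : ℝ) = ∑ j, h j * h j := by
    rw [EuclideanSpace.norm_eq, Real.sq_sqrt (Finset.sum_nonneg fun _ _ => by positivity)]
    simp [sq]
  ext i
  simp only [matVecL_apply, matVec, matVecAdj_apply, PiLp.smul_apply, smul_eq_mul, hns,
    Finset.sum_mul]
  exact Finset.sum_congr rfl fun j _ => by ring

lemma hasGradientAt_comp_matVec {m n : ℕ} (h : EuclideanSpace ℝ (Fin n))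
    (W : EuclideanSpace ℝ (Fin m × Fin n)) (u : EuclideanSpace ℝ (Fin m) → ℝ)
    (gu : EuclideanSpace ℝ (Fin m)) (hu : HasGradientAt u gu (matVec W h)) :
    HasGradientAt (fun V => u (matVec V h)) (matVecAdj h gu) W := by
  rw [hasGradientAt_iff_hasFDerivAt] at hu ⊢
  have hcomp := hu.comp W (matVecL h).hasFDerivAt
  refine hcomp.congr_fderiv ?_
  ext V
  simpa [InnerProductSpace.toDual_apply_apply] using (inner_matVecAdj h gu V).symm

section Residual

variable {m : ℕ} (c : ℝ) (z₀ : EuclideanSpace ℝ (Fin m))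

/-- diagonal 0/1 projection onto clipped coordinates -/
noncomputable def clipProj : EuclideanSpace ℝ (Fin m) →L[ℝ] EuclideanSpace ℝ (Fin m) :=
  LinearMap.toContinuousLinearMap
  { toFun := fun z => WithLp.toLp 2 (fun i => (if c < |z₀ i| then (1:ℝ) else 0) * z i)
    map_add' := by intro z z'; ext i; simp [mul_add]
    map_smul' := by intro a z; ext i; simp }

@[simp] lemma clipProj_apply (z : EuclideanSpace ℝ (Fin m)) (i : Fin m) :
    clipProj c z₀ z i = (if c < |z₀ i| then (1:ℝ) else 0) * z i := rfl

lemma hasFDerivAt_residual (hc : 0 < c) (hz : ∀ i, z₀ i ≠ c ∧ z₀ i ≠ -c) :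
    HasFDerivAt (fun z => z - clip c z) (clipProj c z₀) z₀ := by
  classical
  set b : EuclideanSpace ℝ (Fin m) :=
    WithLp.toLp 2 (fun i => if c < z₀ i then c else if z₀ i < -c then -c else 0) with hb
  have haff : HasFDerivAt (fun z : EuclideanSpace ℝ (Fin m) => clipProj c z₀ z - b)
      (clipProj c z₀) z₀ := (clipProj c z₀).hasFDerivAt.sub_const b
  apply haff.congr_of_eventuallyEq
  have hev : ∀ i : Fin m, ∀ᶠ z in nhds z₀,
      z i - max (-c) (min (z i) c) = (if c < |z₀ i| then (1:ℝ) else 0) * z i - b i := by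
    intro i
    have hcont : ContinuousAt (fun z : EuclideanSpace ℝ (Fin m) => z i) z₀ :=
      (EuclideanSpace.proj i : EuclideanSpace ℝ (Fin m) →L[ℝ] ℝ).continuous.continuousAt
    rcases lt_trichotomy (z₀ i) (-c) with h1 | h1 | h1
    · have habs : c < |z₀ i| := by rw [abs_of_neg (by linarith)]; linarith
      filter_upwards [hcont.eventually_lt continuousAt_const h1] with z hzi
      have h2 : min (z i) c = z i := min_eq_left (by linarith)
      rw [h2, max_eq_left (by linarith), if_pos habs, hb]
      simp only [WithLp.ofLp_toLp]
      rw [if_neg (by linarith), if_pos h1]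
      ring
    · exact absurd h1 (hz i).2
    · rcases lt_trichotomy (z₀ i) c with h2 | h2 | h2
      · have habs : ¬ c < |z₀ i| := not_lt.mpr (abs_le.mpr ⟨by linarith, by linarith⟩)
        have habs2 : |z₀ i| < c := abs_lt.mpr ⟨h1, h2⟩
        have : ContinuousAt (fun z : EuclideanSpace ℝ (Fin m) => |z i|) z₀ := hcont.abs
        filter_upwards [this.eventually_lt continuousAt_const habs2] with z hzi
        rw [abs_lt] at hzi
        rw [min_eq_left hzi.2.le, max_eq_right hzi.1.le, if_neg habs, hb]
        simp only [WithLp.ofLp_toLp]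
        rw [if_neg (by linarith), if_neg (by linarith)]
        ring
      · exact absurd h2 (hz i).1
      · have habs : c < |z₀ i| := by rw [abs_of_pos (by linarith)]; exact h2
        filter_upwards [continuousAt_const.eventually_lt hcont h2] with z hzi
        rw [min_eq_right hzi.le, max_eq_right (by linarith), if_pos habs, hb]
        simp only [WithLp.ofLp_toLp]
        rw [if_pos h2]
        ring
  have := (Filter.eventually_all (ι := Fin m)).2 hev
  filter_upwards [this] with z hzall
  ext i
  have := hzall i
  simpa [clip] using this

lemma clipProj_residual_self :
    clipProj c z₀ (z₀ - clip c z₀) = z₀ - clip c z₀ := by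
  ext i
  simp only [clipProj_apply, PiLp.sub_apply, clip, WithLp.ofLp_toLp]
  by_cases hcase : c < |z₀ i|
  · rw [if_pos hcase]; ring
  · rw [if_neg hcase]
    have hle := abs_le.mp (not_lt.mp hcase)
    rw [min_eq_left hle.2, max_eq_right hle.1]
    ring

end Residual

lemma inner_clipProj {m : ℕ} (c : ℝ) (z₀ u v : EuclideanSpace ℝ (Fin m)) :
    @inner ℝ _ _ u (clipProj c z₀ v) = @inner ℝ _ _ (clipProj c z₀ u) v := by
  simp only [PiLp.inner_apply, RCLike.inner_apply, starRingEnd_apply, star_trivial,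
    clipProj_apply]
  exact Finset.sum_congr rfl fun i _ => by ring

lemma hasGradientAt_residual_norm {m : ℕ} (c : ℝ) (z₀ : EuclideanSpace ℝ (Fin m))
    (hc : 0 < c) (hz : ∀ i, z₀ i ≠ c ∧ z₀ i ≠ -c) (hd : z₀ - clip c z₀ ≠ 0) :
    HasGradientAt (fun z => ‖z - clip c z‖)
      (‖z₀ - clip c z₀‖⁻¹ • (z₀ - clip c z₀)) z₀ := by
  set d := z₀ - clip c z₀ with hdd
  have hdn : ‖d‖ ≠ 0 := norm_ne_zero_iff.mpr hd
  have hr := hasFDerivAt_residual c z₀ hc hz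
  have hsq := hr.norm_sq
  have hs := hsq.sqrt (by simpa using pow_ne_zero 2 hdn)
  have hfun : (fun z : EuclideanSpace ℝ (Fin m) => Real.sqrt (‖z - clip c z‖ ^ 2))
      = fun z => ‖z - clip c z‖ := funext fun z => Real.sqrt_sq (norm_nonneg _)
  rw [hfun] at hs
  rw [hasGradientAt_iff_hasFDerivAt]
  refine hs.congr_fderiv ?_
  ext v
  have h1 : @inner ℝ _ _ d (clipProj c z₀ v) = @inner ℝ _ _ d v := by
    rw [inner_clipProj, hdd, clipProj_residual_self]
  simp only [InnerProductSpace.toDual_apply_apply, ContinuousLinearMap.smul_apply,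
    ContinuousLinearMap.coe_smul', Pi.smul_apply, ContinuousLinearMap.comp_apply,
    innerSL_apply_apply, smul_eq_mul, real_inner_smul_left, Real.sqrt_sq (norm_nonneg _)]
  rw [h1]
  rw [← hdd]; ring


theorem stmt0 {n m : ℕ} (hn : 0 < n) (hm : 0 < m)
    (h : EuclideanSpace ℝ (Fin n)) (W : EuclideanSpace ℝ (Fin m × Fin n))
    (c : ℝ) (hc : 0 < c) (η ζ : ℝ)
    (f : EuclideanSpace ℝ (Fin m) → ℝ) (g : EuclideanSpace ℝ (Fin m))
    (hf : HasGradientAt f g (matVec W h))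
    (hz : ∀ i, matVec W h i ≠ c ∧ matVec W h i ≠ -c)
    (hd : matVec W h - clip c (matVec W h) ≠ 0) :
    DifferentiableAt ℝ
      (fun V : EuclideanSpace ℝ (Fin m × Fin n) =>
        f (matVec V h) + ζ * ‖matVec V h - clip c (matVec V h)‖) W ∧
    matVec
        (W - η • gradient
          (fun V : EuclideanSpace ℝ (Fin m × Fin n) =>
            f (matVec V h) + ζ * ‖matVec V h - clip c (matVec V h)‖) W) h
      - matVec W h
      = ((-η) * ‖h‖ ^ 2) • g
        + ((-η) * ζ * ‖h‖ ^ 2 / ‖matVec W h - clip c (matVec W h)‖) •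
            (matVec W h - clip c (matVec W h)) := by
  set d : EuclideanSpace ℝ (Fin m) := matVec W h - clip c (matVec W h) with hdd
  have hN := hasGradientAt_residual_norm c (matVec W h) hc hz hd
  have hG1 := hasGradientAt_comp_matVec h W f g hf
  have hG2 := hasGradientAt_comp_matVec h W (fun z => ‖z - clip c z‖) (‖d‖⁻¹ • d) hN
  have hF1 := hasGradientAt_iff_hasFDerivAt.mp hG1
  have hF2 := (hasGradientAt_iff_hasFDerivAt.mp hG2).const_mul ζ
  have hFtot := hF1.add hF2
  set G : EuclideanSpace ℝ (Fin m × Fin n) :=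
    matVecAdj h g + ζ • matVecAdj h (‖d‖⁻¹ • d) with hGG
  have htot : HasGradientAt
      (fun V : EuclideanSpace ℝ (Fin m × Fin n) =>
        f (matVec V h) + ζ * ‖matVec V h - clip c (matVec V h)‖) G W := by
    rw [hasGradientAt_iff_hasFDerivAt]
    refine hFtot.congr_fderiv ?_
    ext v
    simp [hGG, inner_add_left, real_inner_smul_left, InnerProductSpace.toDual_apply_apply]
  refine ⟨htot.differentiableAt, ?_⟩
  rw [htot.gradient]
  have key : matVec (W - η • G) h - matVec W h = (-η) • matVecL h G := by
    have : matVec (W - η • G) h = matVecL h (W - η • G) := rfl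
    rw [this, map_sub, map_smul]
    simp only [matVecL_apply]
    module
  rw [key, hGG, map_add, map_smul, matVecL_matVecAdj, matVecL_matVecAdj]
  have hdn : ‖d‖ ≠ 0 := norm_ne_zero_iff.mpr hd
  clear_value d
  match_scalars
  · ring
  · rw [div_eq_mul_inv]; ring
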